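/- Fix k ∈ [K], h ∈ [H], (o,a) with N_k(o,a) > 0, and q ∈ 𝒬, and suppose the event ℰ holds (in particular, for all z ∈ 𝒪: |p̂_k(z|o,a) − p(z|o,a)| ≤ √(2·p(z|o,a)(1−p(z|o,a))·ι/N_k(o,a)) + 2ι/(3N_k(o,a))). Then for any f : 𝒮 → [0,H] and s = (q,o): |(P̂_k − P)f(s,a)| ≤ (1/H)·Σ_{s'} P(s'|s,a)·f(s') + 5H²Oι/(3N_k(o,a)). -/

import Mathlib

open Finset Real
open scoped Classical BigOperators

namespace PRMFormal

/-- All the data of one run of `UCBVI-PRM` on a labeled MDP with a probabilistic reward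
machine: the model `(p, τ, L, ν)`, horizon `H`, number of episodes `K`, confidence
parameter `ρ`, the realized trajectory `st`/`ac` (episode, step, 0-indexed), the optimistic
value functions `Vf`, `Qf` and the greedy policies `pol` computed by the algorithm. -/
structure RunData (QT OT AT E : Type*) where
  p : OT → AT → OT → ℝ
  tk : QT → E → QT → ℝ
  lab : OT → AT → OT → E
  nu : QT → E → QT → ℝ
  H : ℕ
  K : ℕ
  rho : ℝ
  st : ℕ → ℕ → QT × OT
  ac : ℕ → ℕ → AT
  Vf : ℕ → ℕ → QT × OT → ℝ
  Qf : ℕ → ℕ → QT × OT → AT → ℝ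
  pol : ℕ → (QT × OT) → ℕ → AT

namespace RunData

variable {QT OT AT E : Type*} [Fintype QT] [Fintype OT] [Fintype AT]
  [Nonempty QT] [Nonempty OT] [Nonempty AT]

/-- Finite-horizon value iteration for a fixed (Markov, deterministic) policy:
`polValAux P R pi n h s` is the expected sum of the `n` rewards collected from step `h`
on, starting at `s`, under transition kernel `P` and reward `R`. -/
def polValAux (P : (QT × OT) → AT → (QT × OT) → ℝ) (R : (QT × OT) → AT → ℝ)
    (pi : (QT × OT) → ℕ → AT) : ℕ → ℕ → (QT × OT) → ℝ
  | 0, _, _ => 0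
  | n + 1, h, s =>
      R s (pi s h) + ∑ s' : QT × OT, P s (pi s h) s' * polValAux P R pi n (h + 1) s'

variable (D : RunData QT OT AT E)

def Onum (_D : RunData QT OT AT E) : ℕ := Fintype.card OT
def Anum (_D : RunData QT OT AT E) : ℕ := Fintype.card AT
def Qnum (_D : RunData QT OT AT E) : ℕ := Fintype.card QT
/-- total number of time steps `T = KH`. -/
def T : ℕ := D.K * D.H
/-- number of time steps before episode `k` (0-indexed): `T_k = Hk`. -/
def Tk (k : ℕ) : ℕ := D.H * k

noncomputable def iota : ℝ :=
  Real.log (6 * D.Qnum * D.Onum * D.Anum * D.T / D.rho)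

/-- cross-product transition `P((q',o')|(q,o),a) = p(o'|o,a) τ(q'|q,L(o,a,o'))`. -/
def Pker : (QT × OT) → AT → (QT × OT) → ℝ :=
  fun s a s' => D.p s.2 a s'.2 * D.tk s.1 (D.lab s.2 a s'.2) s'.1

/-- cross-product (expected) reward. -/
def Rrew : (QT × OT) → AT → ℝ :=
  fun s a => ∑ s' : QT × OT, D.Pker s a s' * D.nu s.1 (D.lab s.2 a s'.2) s'.1

/-- `N_k(o,a)`: number of visits to `(o,a)` before episode `k`. -/
noncomputable def Nc (k : ℕ) (o : OT) (a : AT) : ℕ :=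
  ∑ i ∈ range k, ∑ h ∈ range D.H, if (D.st i h).2 = o ∧ D.ac i h = a then 1 else 0

/-- `N_k(o,a,z)`. -/
noncomputable def Nc3 (k : ℕ) (o : OT) (a : AT) (z : OT) : ℕ :=
  ∑ i ∈ range k, ∑ h ∈ range D.H,
    if (D.st i h).2 = o ∧ D.ac i h = a ∧ (D.st i (h + 1)).2 = z then 1 else 0

/-- `N'_{k,h}(o)`: number of visits to observation `o` at step `h` before episode `k`. -/
noncomputable def Nstep (k h : ℕ) (o : OT) : ℕ :=
  ∑ i ∈ range k, if (D.st i h).2 = o then 1 else 0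

/-- empirical transition `p̂_k(z|o,a)`. -/
noncomputable def phat (k : ℕ) (o : OT) (a : AT) (z : OT) : ℝ :=
  (D.Nc3 k o a z : ℝ) / (D.Nc k o a : ℝ)

/-- empirical cross-product transition `P̂_k`. -/
noncomputable def Phat (k : ℕ) : (QT × OT) → AT → (QT × OT) → ℝ :=
  fun s a s' => D.phat k s.2 a s'.2 * D.tk s.1 (D.lab s.2 a s'.2) s'.1

/-- empirical cross-product reward `R̂_k`. -/
noncomputable def Rhat (k : ℕ) : (QT × OT) → AT → ℝ :=
  fun s a => ∑ s' : QT × OT, D.Phat k s a s' * D.nu s.1 (D.lab s.2 a s'.2) s'.1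

/-- `W(q,o,a,o') = Σ_{q'} τ(q'|q,L(o,a,o')) V(q',o')` for a value function `V`. -/
def Wof (V : QT × OT → ℝ) (q : QT) (o : OT) (a : AT) (o' : OT) : ℝ :=
  ∑ q' : QT, D.tk q (D.lab o a o') q' * V (q', o')

/-- variance of `w` under the (sub)distribution `pr` over next observations. -/
def varD (_D : RunData QT OT AT E) (pr : OT → ℝ) (w : OT → ℝ) : ℝ :=
  ∑ o', pr o' * (w o' - ∑ z, pr z * w z) ^ 2

/-- value function of policy `pi` in the true cross-product MDP (`V_h^π`, 0-indexed,
`Vpol pi H = 0`). -/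
noncomputable def Vpol (pi : (QT × OT) → ℕ → AT) (h : ℕ) (s : QT × OT) : ℝ :=
  polValAux D.Pker D.Rrew pi (D.H - h) h s

/-- optimal value function `V_h^*`. -/
noncomputable def Vstar (h : ℕ) (s : QT × OT) : ℝ :=
  ⨆ pi : (QT × OT) → ℕ → AT, D.Vpol pi h s

/-- the Bernstein-type exploration bonus `b_{k,h}(s,a)` of Algorithm 2. -/
noncomputable def bonusB (k h : ℕ) (s : QT × OT) (a : AT) : ℝ :=
  Real.sqrt (8 * D.iota * D.varD (D.phat k s.2 a) (D.Wof (D.Vf k (h + 1)) s.1 s.2 a)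
      / (D.Nc k s.2 a : ℝ))
    + 14 * D.H * D.iota / (3 * (D.Nc k s.2 a : ℝ))
    + Real.sqrt (2 * D.iota / (D.Nc k s.2 a : ℝ))
    + Real.sqrt ((8 / (D.Nc k s.2 a : ℝ)) * ∑ o' : OT, D.phat k s.2 a o' *
        min (100 ^ 2 * (D.H : ℝ) ^ 3 * (D.Onum : ℝ) ^ 2 * (D.Anum : ℝ) * D.iota ^ 2
              / (D.Nstep k (h + 1) o' : ℝ)) ((D.H : ℝ) ^ 2))

/-- the defining properties of a run of `UCBVI-PRM` (model validity, initialization,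
value iteration with bonus, greediness, and consistency of played actions). -/
def IsUCBVIRun : Prop :=
  (∀ o a o', 0 ≤ D.p o a o') ∧ (∀ o a, ∑ o', D.p o a o' = 1) ∧
  (∀ q e q', 0 ≤ D.tk q e q') ∧ (∀ q e, ∑ q', D.tk q e q' = 1) ∧
  (∀ q e q', D.nu q e q' ∈ Set.Icc (0 : ℝ) 1) ∧
  0 < D.rho ∧ D.rho < 1 ∧ 0 < D.H ∧
  (∀ h s a, D.Qf 0 h s a = D.H) ∧
  (∀ k s a, D.Qf k D.H s a = 0) ∧
  (∀ k s, D.Vf k D.H s = 0) ∧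
  (∀ k h s a, h < D.H →
    D.Qf (k + 1) h s a =
      if 0 < D.Nc (k + 1) s.2 a then
        min (D.Qf k h s a) (min (D.H : ℝ)
          (D.Rhat (k + 1) s a + (∑ s' : QT × OT, D.Phat (k + 1) s a s' * D.Vf (k + 1) (h + 1) s')
            + D.bonusB (k + 1) h s a))
      else (D.H : ℝ)) ∧
  (∀ k h s, D.Vf k h s = ⨆ a, D.Qf k h s a) ∧
  (∀ k s h, D.Qf k h s (D.pol k s h) = ⨆ a, D.Qf k h s a) ∧
  (∀ k h, D.ac k h = D.pol k (D.st k h) h)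

/-- `e_{i,j} = ((P̂_i − P) V^*_{j+1})(s_{i,j}, a_{i,j})`. -/
noncomputable def eErr (i j : ℕ) : ℝ :=
  ∑ s' : QT × OT,
    (D.Phat i (D.st i j) (D.ac i j) s' - D.Pker (D.st i j) (D.ac i j) s') * D.Vstar (j + 1) s'

/-- `ē_{i,j} = (R̂_i − R)(s_{i,j}, a_{i,j})`. -/
noncomputable def rErr (i j : ℕ) : ℝ :=
  D.Rhat i (D.st i j) (D.ac i j) - D.Rrew (D.st i j) (D.ac i j)

/-- `ξ_{i,j} = 5H²Oι/(3N_i(o_{i,j},a_{i,j}))`. -/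
noncomputable def xiQ (i j : ℕ) : ℝ :=
  5 * (D.H : ℝ) ^ 2 * (D.Onum : ℝ) * D.iota / (3 * (D.Nc i (D.st i j).2 (D.ac i j) : ℝ))

/-- the bonus along the trajectory. -/
noncomputable def bTerm (i j : ℕ) : ℝ := D.bonusB i j (D.st i j) (D.ac i j)

/-- `δ̃_{i,j} = V_{i,j}(s_{i,j}) − V_j^{π_i}(s_{i,j})`. -/
noncomputable def tdelta (i j : ℕ) : ℝ :=
  D.Vf i j (D.st i j) - D.Vpol (D.pol i) j (D.st i j)

/-- `δ_{i,j} = V_j^*(s_{i,j}) − V_j^{π_i}(s_{i,j})`. -/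
noncomputable def delta (i j : ℕ) : ℝ :=
  D.Vstar j (D.st i j) - D.Vpol (D.pol i) j (D.st i j)

/-- martingale difference `ε_{i,j} = (P Δ̃_{i,j+1})(s_{i,j},a_{i,j}) − δ̃_{i,j+1}`. -/
noncomputable def epsM (i j : ℕ) : ℝ :=
  (∑ s' : QT × OT, D.Pker (D.st i j) (D.ac i j) s' *
      (D.Vf i (j + 1) s' - D.Vpol (D.pol i) (j + 1) s'))
    - (D.Vf i (j + 1) (D.st i (j + 1)) - D.Vpol (D.pol i) (j + 1) (D.st i (j + 1)))

/-- `U_{k,h}`. -/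
noncomputable def Uq (k h : ℕ) : ℝ :=
  Real.exp 1 * ∑ i ∈ range k, ∑ j ∈ Ico h D.H,
      (D.bTerm i j + D.eErr i j + D.rErr i j + D.xiQ i j)
    + D.H * Real.sqrt (D.Tk k * D.iota)

/-- state-restricted `U_{k,h,s}`. -/
noncomputable def Uqs (k h : ℕ) (s : QT × OT) : ℝ :=
  Real.exp 1 * ∑ i ∈ range k,
      (if D.st i h = s then
        ∑ j ∈ Ico h D.H, (D.bTerm i j + D.eErr i j + D.rErr i j + D.xiQ i j) else 0)
    + D.H * Real.sqrt (D.H * (D.Nstep k h s.2 : ℝ) * D.iota)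

/-- `W_h^*`. -/
noncomputable def Wstar (h : ℕ) (q : QT) (o : OT) (a : AT) (o' : OT) : ℝ :=
  D.Wof (D.Vstar h) q o a o'

/-- `𝕎_h^*(q,o,a)`. -/
noncomputable def VarWstar (h : ℕ) (q : QT) (o : OT) (a : AT) : ℝ :=
  D.varD (D.p o a) (D.Wstar h q o a)

/-- `𝕎̂_{k,h}^*(q,o,a)`. -/
noncomputable def VarWstarHat (k h : ℕ) (q : QT) (o : OT) (a : AT) : ℝ :=
  D.varD (D.phat k o a) (D.Wstar h q o a)

/-- `𝕎_h^π(q,o,a)`. -/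
noncomputable def VarWpol (pi : (QT × OT) → ℕ → AT) (h : ℕ) (q : QT) (o : OT) (a : AT) : ℝ :=
  D.varD (D.p o a) (D.Wof (D.Vpol pi h) q o a)

/-- `𝕎̂_{k,h}(q,o,a)`. -/
noncomputable def VarWhat (k h : ℕ) (q : QT) (o : OT) (a : AT) : ℝ :=
  D.varD (D.phat k o a) (D.Wof (D.Vf k h) q o a)

/-- `𝕎^{π_i}_{i,j+1}` along the trajectory. -/
noncomputable def WvarPolStep (i j : ℕ) : ℝ :=
  D.VarWpol (D.pol i) (j + 1) (D.st i j).1 (D.st i j).2 (D.ac i j)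

/-- `𝕎^*_{i,j+1}` along the trajectory. -/
noncomputable def WvarStarStep (i j : ℕ) : ℝ :=
  D.VarWstar (j + 1) (D.st i j).1 (D.st i j).2 (D.ac i j)

/-- `𝕎̂_{i,j+1}` along the trajectory. -/
noncomputable def WvarHatStep (i j : ℕ) : ℝ :=
  D.VarWhat i (j + 1) (D.st i j).1 (D.st i j).2 (D.ac i j)

noncomputable def c1 (v u n : ℝ) : ℝ := 2 * Real.sqrt (v * D.iota / n) + 14 * u * D.iota / (3 * n)
noncomputable def c2 (pr n : ℝ) : ℝ :=
  Real.sqrt (2 * pr * (1 - pr) * D.iota / n) + 2 * D.iota / (3 * n)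
noncomputable def c3 (n : ℝ) : ℝ := 2 * Real.sqrt ((D.Onum : ℝ) * D.iota / n)
noncomputable def c4 (u n : ℝ) : ℝ := u * Real.sqrt (D.iota / n)

/-- `b'_{i,j}(o) = min(100²H³O²Aι²/N'_{i,j}(o), H²)`. -/
noncomputable def bprime (i j : ℕ) (o : OT) : ℝ :=
  min (100 ^ 2 * (D.H : ℝ) ^ 3 * (D.Onum : ℝ) ^ 2 * (D.Anum : ℝ) * D.iota ^ 2
        / (D.Nstep i j o : ℝ)) ((D.H : ℝ) ^ 2)

/-- The high-probability event `ℰ`: all Bernstein-, Azuma- and Freedman-type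
concentration inequalities of the analysis hold simultaneously for the realized run. -/
def EventE : Prop :=
  (∀ k ≤ D.K, ∀ h < D.H, ∀ (q : QT) (o : OT) (a : AT), 0 < D.Nc k o a →
    (|∑ o', (D.phat k o a o' - D.p o a o') * D.Wstar h q o a o'| ≤
        min (D.c1 (D.VarWstar h q o a) D.H (D.Nc k o a))
            (D.c1 (D.VarWstarHat k h q o a) D.H (D.Nc k o a))) ∧
    (∀ z, |D.phat k o a z - D.p o a z| ≤ D.c2 (D.p o a z) (D.Nc k o a)) ∧
    (∑ z, |D.phat k o a z - D.p o a z| ≤ D.c3 (D.Nc k o a)) ∧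
    (|∑ o', (D.phat k o a o' - D.p o a o') *
        (∑ q', D.tk q (D.lab o a o') q' * D.nu q (D.lab o a o') q')| ≤
      D.c4 1 (D.Nc k o a))) ∧
  (∀ k ≤ D.K, ∀ h < D.H,
    ∑ i ∈ range k, ∑ j ∈ Ico h D.H, D.epsM i j ≤
      2 * Real.sqrt ((k : ℝ) * ((D.H : ℝ) - h) * (D.H : ℝ) ^ 2 * D.iota)) ∧
  (∀ k ≤ D.K, ∀ h < D.H, ∀ s : QT × OT,
    ∑ i ∈ range k, (if D.st i h = s then ∑ j ∈ Ico h D.H, D.epsM i j else 0) ≤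
      2 * Real.sqrt ((D.Nstep k h s.2 : ℝ) * ((D.H : ℝ) - h) * (D.H : ℝ) ^ 2 * D.iota)) ∧
  (∀ k ≤ D.K, ∀ h < D.H,
    ∑ i ∈ range k, ∑ j ∈ Ico h D.H, D.WvarPolStep i j ≤
      (D.Tk k : ℝ) * D.H + 2 * Real.sqrt ((D.H : ℝ) ^ 4 * (D.Tk k : ℝ) * D.iota)
        + 4 * (D.H : ℝ) ^ 3 * D.iota / 3) ∧
  (∀ k ≤ D.K, ∀ h < D.H, ∀ s : QT × OT,
    ∑ i ∈ range k, (if D.st i h = s then ∑ j ∈ Ico h D.H, D.WvarPolStep i j else 0) ≤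
      (D.Nstep k h s.2 : ℝ) * (D.H : ℝ) ^ 2
        + 2 * Real.sqrt ((D.H : ℝ) ^ 5 * (D.Nstep k h s.2 : ℝ) * D.iota)
        + 4 * (D.H : ℝ) ^ 3 * D.iota / 3) ∧
  (∀ k ≤ D.K, ∀ h < D.H,
    ∑ i ∈ range k, ∑ j ∈ Ico h D.H,
        ((∑ z, D.p (D.st i j).2 (D.ac i j) z * D.bprime i (j + 1) z)
          - D.bprime i (j + 1) (D.st i (j + 1)).2) ≤
      2 * Real.sqrt ((k : ℝ) * ((D.H : ℝ) - h) * (D.H : ℝ) ^ 4 * D.iota)) ∧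
  (∀ k ≤ D.K, ∀ h < D.H, ∀ s : QT × OT,
    ∑ i ∈ range k, (if D.st i h = s then
        ∑ j ∈ Ico h D.H,
          ((∑ z, D.p (D.st i j).2 (D.ac i j) z * D.bprime i (j + 1) z)
            - D.bprime i (j + 1) (D.st i (j + 1)).2) else 0) ≤
      2 * Real.sqrt ((D.Nstep k h s.2 : ℝ) * ((D.H : ℝ) - h) * (D.H : ℝ) ^ 4 * D.iota))

/-- The event `Ω_{k,h}`: every optimistic value function computed before step `h` of
episode `k` upper-bounds the optimal value function. -/
def OmegaEv (k h : ℕ) : Prop :=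
  ∀ i < D.K, ∀ j ≤ D.H, (i < k ∨ (i = k ∧ h < j)) →
    ∀ s : QT × OT, D.Vstar j s ≤ D.Vf i j s

/-- typical episodes `[k]_typ`. -/
def typEp (k i : ℕ) : Prop :=
  (∀ h < D.H, D.H ≤ D.Nc k (D.st i h).2 (D.ac i h) ∧ D.H ≤ D.Nstep k h (D.st i h).2) ∧
  650 * (D.H : ℝ) * (D.Onum : ℝ) ^ 2 * (D.Anum : ℝ) ^ 2 * D.iota ≤ (i : ℝ)

/-- `C_{k,h}`. -/
noncomputable def Cq (k h : ℕ) : ℝ :=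
  ∑ i ∈ range k, if D.typEp k i then ∑ j ∈ Ico h D.H, D.eErr i j else 0

/-- `C_{k,h,s}`. -/
noncomputable def Cqs (k h : ℕ) (s : QT × OT) : ℝ :=
  ∑ i ∈ range k, if D.typEp k i ∧ D.st i h = s then ∑ j ∈ Ico h D.H, D.eErr i j else 0

/-- `B_{k,h}`. -/
noncomputable def Bq (k h : ℕ) : ℝ :=
  ∑ i ∈ range k, if D.typEp k i then ∑ j ∈ Ico h D.H, D.bTerm i j else 0

/-- `B_{k,h,s}`. -/
noncomputable def Bqs (k h : ℕ) (s : QT × OT) : ℝ :=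
  ∑ i ∈ range k, if D.typEp k i ∧ D.st i h = s then ∑ j ∈ Ico h D.H, D.bTerm i j else 0

end RunData

end PRMFormal

set_option maxHeartbeats 1000000

namespace PRMFormal

open RunData

/-- **Lemma (model error under a bounded function).** Fix `k ∈ [K]`, `h ∈ [H]`, `(o,a)`
with `N_k(o,a) > 0` and `q`, and suppose `ℰ` holds (in particular, the Bernstein bound
`|p̂_k(z|o,a) − p(z|o,a)| ≤ √(2p(z|o,a)(1−p(z|o,a))ι/N_k(o,a)) + 2ι/(3N_k(o,a))` for all
`z`, which is part of `ℰ`). Then for every `f : 𝒮 → [0,H]` and `s = (q,o)`,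
`|(P̂_k − P)f(s,a)| ≤ (1/H)·Σ_{s'} P(s'|s,a) f(s') + 5H²Oι/(3N_k(o,a))`. -/
theorem stmt7 {QT OT AT E : Type*} [Fintype QT] [Fintype OT] [Fintype AT]
    [Nonempty QT] [Nonempty OT] [Nonempty AT]
    (D : RunData QT OT AT E) (hrun : D.IsUCBVIRun) (hE : D.EventE)
    (k h : ℕ) (hk : k ≤ D.K) (hh : h < D.H)
    (q : QT) (o : OT) (a : AT) (hN : 0 < D.Nc k o a)
    (f : QT × OT → ℝ) (hf0 : ∀ s', 0 ≤ f s') (hfH : ∀ s', f s' ≤ D.H) :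
    |∑ s' : QT × OT, (D.Phat k (q, o) a s' - D.Pker (q, o) a s') * f s'| ≤
      (∑ s' : QT × OT, D.Pker (q, o) a s' * f s') / (D.H : ℝ)
        + 5 * (D.H : ℝ) ^ 2 * (D.Onum : ℝ) * D.iota / (3 * (D.Nc k o a : ℝ)) := by
  obtain ⟨hp0, hp1, htk0, htk1, _, hρ0, hρ1, hHn, _⟩ := hrun
  set N : ℝ := (D.Nc k o a : ℝ) with hNdef
  set ι : ℝ := D.iota with hιdef
  have hNpos : (0 : ℝ) < N := by rw [hNdef]; exact_mod_cast hN
  have hH1 : (1 : ℝ) ≤ (D.H : ℝ) := by exact_mod_cast hHn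
  have hHpos : (0 : ℝ) < (D.H : ℝ) := by linarith
  -- ι ≥ 0
  have hk1 : 1 ≤ k := by
    rcases Nat.eq_zero_or_pos k with h0 | h1
    · subst h0; simp [RunData.Nc] at hN
    · exact h1
  have hι : 0 ≤ ι := by
    rw [hιdef, RunData.iota]
    apply Real.log_nonneg
    rw [one_le_div hρ0]
    have hQ : (1 : ℝ) ≤ (D.Qnum : ℝ) := by exact_mod_cast Fintype.card_pos (α := QT)
    have hO : (1 : ℝ) ≤ (D.Onum : ℝ) := by exact_mod_cast Fintype.card_pos (α := OT)
    have hA : (1 : ℝ) ≤ (D.Anum : ℝ) := by exact_mod_cast Fintype.card_pos (α := AT)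
    have hT : (1 : ℝ) ≤ (D.T : ℝ) := by
      have : 1 ≤ D.T := Nat.one_le_iff_ne_zero.mpr (by
        have : 0 < D.K * D.H := Nat.mul_pos (hk1.trans hk) hHn
        exact Nat.pos_iff_ne_zero.mp this)
      exact_mod_cast this
    have m1 : (1:ℝ) ≤ 6 * (D.Qnum : ℝ) := by nlinarith
    have m2 : (1:ℝ) ≤ 6 * (D.Qnum : ℝ) * (D.Onum : ℝ) := by nlinarith
    have m3 : (1:ℝ) ≤ 6 * (D.Qnum : ℝ) * (D.Onum : ℝ) * (D.Anum : ℝ) := by nlinarith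
    have m4 : (1:ℝ) ≤ 6 * (D.Qnum : ℝ) * (D.Onum : ℝ) * (D.Anum : ℝ) * (D.T : ℝ) := by nlinarith
    linarith
  -- Bernstein bound from the event
  have hc2 : ∀ z, |D.phat k o a z - D.p o a z| ≤ D.c2 (D.p o a z) N :=
    ((hE.1 k hk h hh q o a hN).2.1)
  -- the per-observation value W
  set W : OT → ℝ := fun o' => ∑ q' : QT, D.tk q (D.lab o a o') q' * f (q', o') with hWdef
  have hW0 : ∀ o', 0 ≤ W o' := fun o' =>
    Finset.sum_nonneg fun q' _ => mul_nonneg (htk0 _ _ _) (hf0 _)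
  have hWH : ∀ o', W o' ≤ (D.H : ℝ) := by
    intro o'
    calc W o' ≤ ∑ q' : QT, D.tk q (D.lab o a o') q' * (D.H : ℝ) :=
          Finset.sum_le_sum fun q' _ => mul_le_mul_of_nonneg_left (hfH _) (htk0 _ _ _)
      _ = (∑ q' : QT, D.tk q (D.lab o a o') q') * (D.H : ℝ) := by rw [Finset.sum_mul]
      _ = (D.H : ℝ) := by rw [htk1]; ring
  have hp1' : ∀ o', D.p o a o' ≤ 1 := by
    intro o'
    have h := Finset.single_le_sum (f := fun z => D.p o a z)
      (fun z _ => hp0 _ _ _) (Finset.mem_univ o')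
    rw [hp1 o a] at h; exact h
  -- rearrange the product-state sums
  have key1 : ∑ s' : QT × OT, (D.Phat k (q, o) a s' - D.Pker (q, o) a s') * f s'
      = ∑ o' : OT, (D.phat k o a o' - D.p o a o') * W o' := by
    rw [Fintype.sum_prod_type, Finset.sum_comm]
    refine Finset.sum_congr rfl fun o' _ => ?_
    simp only [RunData.Phat, RunData.Pker, hWdef, Finset.mul_sum]
    refine Finset.sum_congr rfl fun q' _ => ?_
    ring
  have key2 : ∑ s' : QT × OT, D.Pker (q, o) a s' * f s'
      = ∑ o' : OT, D.p o a o' * W o' := by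
    rw [Fintype.sum_prod_type, Finset.sum_comm]
    refine Finset.sum_congr rfl fun o' _ => ?_
    simp only [RunData.Pker, hWdef, Finset.mul_sum]
    refine Finset.sum_congr rfl fun q' _ => ?_
    ring
  -- AM-GM
  have amgm : ∀ x y : ℝ, 0 ≤ x → 0 ≤ y → Real.sqrt (x * y) ≤ (x + y) / 2 := by
    intro x y hx hy
    rw [Real.sqrt_mul hx]
    nlinarith [Real.sq_sqrt hx, Real.sq_sqrt hy, sq_nonneg (Real.sqrt x - Real.sqrt y),
      Real.sqrt_nonneg x, Real.sqrt_nonneg y]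
  -- per-observation bound
  have per : ∀ o' : OT, |D.phat k o a o' - D.p o a o'| * W o' ≤
      D.p o a o' * W o' / (D.H : ℝ)
        + ((D.H : ℝ) ^ 2 * ι / N + 2 * (D.H : ℝ) * ι / (3 * N)) := by
    intro o'
    set P : ℝ := D.p o a o' with hPdef
    have hP0 : 0 ≤ P := hp0 _ _ _
    have hP1 : P ≤ 1 := hp1' o'
    have hW0' := hW0 o'
    have hWH' := hWH o'
    have hb := hc2 o'
    simp only [RunData.c2] at hb
    have step1 : |D.phat k o a o' - D.p o a o'| * W o' ≤
        (Real.sqrt (2 * P * (1 - P) * ι / N) + 2 * ι / (3 * N)) * W o' :=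
      mul_le_mul_of_nonneg_right hb hW0'
    have h2 : Real.sqrt (2 * P * (1 - P) * ι / N) * W o' ≤
        Real.sqrt (2 * P * ι / N * W o' ^ 2) := by
      rw [Real.sqrt_mul (by positivity) (W o' ^ 2), Real.sqrt_sq hW0']
      refine mul_le_mul_of_nonneg_right (Real.sqrt_le_sqrt ?_) hW0'
      apply (div_le_div_iff_of_pos_right hNpos).mpr
      nlinarith [mul_nonneg (mul_nonneg hP0 hP0) hι]
    have h4 : 2 * P * ι / N * W o' ^ 2
        = (P * W o' ^ 2 / (D.H : ℝ) ^ 2) * (2 * (D.H : ℝ) ^ 2 * ι / N) := by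
      field_simp
    have h5 : Real.sqrt (2 * P * ι / N * W o' ^ 2) ≤
        (P * W o' ^ 2 / (D.H : ℝ) ^ 2 + 2 * (D.H : ℝ) ^ 2 * ι / N) / 2 := by
      rw [h4]
      exact amgm _ _ (by positivity) (by positivity)
    have h6 : P * W o' ^ 2 / (D.H : ℝ) ^ 2 ≤ P * W o' / (D.H : ℝ) := by
      rw [div_le_div_iff₀ (by positivity) hHpos]
      nlinarith [mul_le_mul_of_nonneg_left hWH'
        (mul_nonneg (mul_nonneg hP0 hW0') hHpos.le)]
    have h7 : 2 * ι / (3 * N) * W o' ≤ 2 * ι / (3 * N) * (D.H : ℝ) :=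
      mul_le_mul_of_nonneg_left hWH'
        (div_nonneg (by linarith) (by positivity))
    have h8 : 2 * ι / (3 * N) * (D.H : ℝ) = 2 * (D.H : ℝ) * ι / (3 * N) := by ring
    have hB : (0:ℝ) ≤ 2 * (D.H : ℝ) ^ 2 * ι / N := by positivity
    have hC : (0:ℝ) ≤ P * W o' / (D.H : ℝ) :=
      div_nonneg (mul_nonneg hP0 hW0') hHpos.le
    calc |D.phat k o a o' - D.p o a o'| * W o'
        ≤ (Real.sqrt (2 * P * (1 - P) * ι / N) + 2 * ι / (3 * N)) * W o' := step1
      _ = Real.sqrt (2 * P * (1 - P) * ι / N) * W o' + 2 * ι / (3 * N) * W o' := by ring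
      _ ≤ Real.sqrt (2 * P * ι / N * W o' ^ 2) + 2 * ι / (3 * N) * (D.H : ℝ) := by
          linarith [h2, h7]
      _ ≤ (P * W o' ^ 2 / (D.H : ℝ) ^ 2 + 2 * (D.H : ℝ) ^ 2 * ι / N) / 2
            + 2 * (D.H : ℝ) * ι / (3 * N) := by
          linarith [h5, h8]
      _ = P * W o' ^ 2 / (D.H : ℝ) ^ 2 / 2 + ((D.H : ℝ) ^ 2 * ι / N
            + 2 * (D.H : ℝ) * ι / (3 * N)) := by ring
      _ ≤ P * W o' / (D.H : ℝ) + ((D.H : ℝ) ^ 2 * ι / N + 2 * (D.H : ℝ) * ι / (3 * N)) := by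
          have h9 : P * W o' ^ 2 / (D.H : ℝ) ^ 2 / 2 ≤ P * W o' / (D.H : ℝ) := by
            linarith [h6, hC]
          linarith [h9]
  -- sum up
  have hsum : |∑ o' : OT, (D.phat k o a o' - D.p o a o') * W o'| ≤
      (∑ o' : OT, D.p o a o' * W o') / (D.H : ℝ)
        + (Fintype.card OT : ℝ) * ((D.H : ℝ) ^ 2 * ι / N + 2 * (D.H : ℝ) * ι / (3 * N)) := by
    calc |∑ o' : OT, (D.phat k o a o' - D.p o a o') * W o'|
        ≤ ∑ o' : OT, |(D.phat k o a o' - D.p o a o') * W o'| :=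
          Finset.abs_sum_le_sum_abs _ _
      _ = ∑ o' : OT, |D.phat k o a o' - D.p o a o'| * W o' := by
          refine Finset.sum_congr rfl fun o' _ => ?_
          rw [abs_mul, abs_of_nonneg (hW0 o')]
      _ ≤ ∑ o' : OT, (D.p o a o' * W o' / (D.H : ℝ)
            + ((D.H : ℝ) ^ 2 * ι / N + 2 * (D.H : ℝ) * ι / (3 * N))) :=
          Finset.sum_le_sum fun o' _ => per o'
      _ = (∑ o' : OT, D.p o a o' * W o') / (D.H : ℝ)
            + (Fintype.card OT : ℝ) * ((D.H : ℝ) ^ 2 * ι / N + 2 * (D.H : ℝ) * ι / (3 * N)) := by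
          rw [Finset.sum_add_distrib, Finset.sum_const, ← Finset.sum_div,
            Finset.card_univ, nsmul_eq_mul]
  rw [key1, key2]
  set S : ℝ := ∑ o' : OT, D.p o a o' * W o' with hSdef
  have hS0 : 0 ≤ S :=
    Finset.sum_nonneg fun o' _ => mul_nonneg (hp0 _ _ _) (hW0 o')
  have hOcast : (D.Onum : ℝ) = (Fintype.card OT : ℝ) := rfl
  have hO1 : (1 : ℝ) ≤ (Fintype.card OT : ℝ) := by exact_mod_cast Fintype.card_pos (α := OT)
  have hfrac : (Fintype.card OT : ℝ) * ((D.H : ℝ) ^ 2 * ι / N + 2 * (D.H : ℝ) * ι / (3 * N))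
      ≤ 5 * (D.H : ℝ) ^ 2 * (D.Onum : ℝ) * ι / (3 * N) := by
    rw [hOcast]
    set O : ℝ := (Fintype.card OT : ℝ)
    have e1 : O * ((D.H : ℝ) ^ 2 * ι / N + 2 * (D.H : ℝ) * ι / (3 * N))
        = (O * (D.H : ℝ) ^ 2 * ι + 2 * O * (D.H : ℝ) * ι / 3) / N := by
      field_simp
    have e2 : 5 * (D.H : ℝ) ^ 2 * O * ι / (3 * N)
        = (5 * (D.H : ℝ) ^ 2 * O * ι / 3) / N := by
      field_simp
    rw [e1, e2]
    apply (div_le_div_iff_of_pos_right hNpos).mpr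
    nlinarith [mul_nonneg (mul_nonneg (by linarith : (0:ℝ) ≤ O) hι) (by nlinarith : (0:ℝ) ≤ (D.H : ℝ) ^ 2 - (D.H : ℝ))]
  calc |∑ o' : OT, (D.phat k o a o' - D.p o a o') * W o'|
      ≤ S / (D.H : ℝ)
        + (Fintype.card OT : ℝ) * ((D.H : ℝ) ^ 2 * ι / N + 2 * (D.H : ℝ) * ι / (3 * N)) := hsum
    _ ≤ S / (D.H : ℝ) + 5 * (D.H : ℝ) ^ 2 * (D.Onum : ℝ) * ι / (3 * N) := by
        linarith

end PRMFormal
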